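/- Let q ≥ 3 be an integer, N = (q−2)/2 if q is even and N = q−2 if q is odd, and b_l (0 ≤ l ≤ N−1) as in the context. Let σ : ℕ → ℝ with σ_0 = 1, let c_n^j (n ≥ 0, 1 ≤ j ≤ q−1) be real numbers satisfying c_0^j = 0 for 1 ≤ j ≤ q−2, c_0^{q−1} = σ_1, and for all n ≥ 1: c_n^l = c_{n−1}^{l+2} (1 ≤ l ≤ q−3), c_n^{q−2} = c_{n−1}^2, c_n^{q−1} = c_n^1 + σ_{n+1} − σ_n. Let K : ℕ → ℝ satisfy K_0 = 1 − ((q−2)/(2q))·σ_1 and, for all n ≥ 1, Σ_{l=0}^{n} K_l = 1 − ((q−2)/(2q))·(σ_{n+1} − σ_n) + Σ_{j=2}^{q−2} ((q−2j)/(2q))·c_n^j. Set κ'_m = (2q/(q−2))·K_m. Then for all n ≥ 1: σ_{n+1} = σ_1 + Σ_{l=0}^{n−1} (b_l·σ_{n−l} − κ'_{n−l}) if 1 ≤ n < N; σ_{N+1} = Σ_{l=0}^{N−1} (b_l·σ_{N−l} − κ'_{N−l}) if n = N; and σ_{n+1} = −σ_{n−N} + Σ_{l=0}^{N−1} (b_l·σ_{n−l}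 − κ'_{n−l}) if n > N. -/

import Mathlib

open Finset

private noncomputable def auxF (σ : ℕ → ℝ) (N : ℕ) : ℕ → ℝ
  | 0 => σ 1
  | (m+1) => (σ (m+2) - σ (m+1)) +
      (if h : 1 ≤ N ∧ N ≤ m + 1 then auxF σ N (m + 1 - N) else 0)
  decreasing_by omega

private def km (q j : ℕ) : ℕ :=
  if (q - 1 - j) % 2 = 0 then (q - 1 - j) / 2 else (2*q - 3 - j) / 2

private def jm (q k : ℕ) : ℕ :=
  if 2*k + 3 ≤ q then q - 1 - 2*k else 2*q - 3 - 2*k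

private noncomputable def uC (q k : ℕ) : ℝ :=
  (4*(k:ℝ)+2-(q:ℝ))/(2*(q:ℝ)) -
    (if q % 2 = 1 ∧ q ≤ 2*k+1 then (2*(q:ℝ)-4)/(2*(q:ℝ)) else 0)

private lemma ML (q N : ℕ) (σ : ℕ → ℝ) (c : ℕ → ℕ → ℝ)
    (hq : 3 ≤ q)
    (hqp : q % 2 = 0 ∧ 2*N + 2 = q ∨ q % 2 = 1 ∧ N + 2 = q)
    (hc0 : ∀ j, 1 ≤ j → j ≤ q - 2 → c 0 j = 0)
    (hc0' : c 0 (q - 1) = σ 1)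
    (hrec1 : ∀ n, 1 ≤ n → ∀ l, 1 ≤ l → l ≤ q - 3 → c n l = c (n - 1) (l + 2))
    (hrec2 : ∀ n, 1 ≤ n → c n (q - 2) = c (n - 1) 2)
    (hrec3 : ∀ n, 1 ≤ n → c n (q - 1) = c n 1 + σ (n + 1) - σ n) :
    ∀ n j, 1 ≤ j → j ≤ q - 1 →
      c n j = if q % 2 = 0 ∧ j % 2 = 0 then 0
        else if km q j ≤ n then auxF σ N (n - km q j) else 0 := by
  intro n
  induction n with
  | zero =>
    intro j hj1 hj2
    by_cases hje : j = q - 1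
    · subst hje
      have hkm : km q (q-1) = 0 := by unfold km; split <;> omega
      rw [if_neg (by omega : ¬(q % 2 = 0 ∧ (q-1) % 2 = 0)), hkm,
        if_pos (Nat.le_refl 0)]
      simpa [auxF] using hc0'
    · rw [hc0 j hj1 (by omega)]
      by_cases hex : q % 2 = 0 ∧ j % 2 = 0
      · rw [if_pos hex]
      · have hkm : 1 ≤ km q j := by unfold km; split <;> omega
        rw [if_neg hex, if_neg (by omega)]
  | succ n IH =>
    have hN1 : 1 ≤ N := by omega
    have key : ∀ j, 1 ≤ j → j ≤ q - 2 →
        c (n+1) j = if q % 2 = 0 ∧ j % 2 = 0 then 0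
          else if km q j ≤ n+1 then auxF σ N (n+1 - km q j) else 0 := by
      intro j hj1 hj2
      by_cases hje : j = q - 2
      · subst hje
        have h2 := hrec2 (n+1) (by omega)
        rw [Nat.add_sub_cancel] at h2
        rw [h2, IH 2 (by omega) (by omega)]
        by_cases hpar : q % 2 = 0
        · rw [if_pos ⟨hpar, by omega⟩, if_pos ⟨hpar, by omega⟩]
        · have hkm : km q (q - 2) = km q 2 + 1 := by
            unfold km; split <;> split <;> omega
          rw [if_neg (by omega : ¬(q % 2 = 0 ∧ 2 % 2 = 0)),
            if_neg (by omega : ¬(q % 2 = 0 ∧ (q-2) % 2 = 0)), hkm]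
          by_cases hc2 : km q 2 ≤ n
          · rw [if_pos hc2, if_pos (by omega)]
            congr 1; omega
          · rw [if_neg hc2, if_neg (by omega)]
      · have hj3 : j ≤ q - 3 := by omega
        have h1 := hrec1 (n+1) (by omega) j hj1 hj3
        rw [Nat.add_sub_cancel] at h1
        rw [h1, IH (j+2) (by omega) (by omega)]
        have hkm : km q j = km q (j+2) + 1 := by unfold km; split <;> split <;> omega
        by_cases hex : q % 2 = 0 ∧ j % 2 = 0
        · rw [if_pos ⟨hex.1, by omega⟩, if_pos hex]
        · rw [if_neg (by omega : ¬(q % 2 = 0 ∧ (j+2) % 2 = 0)), if_neg hex, hkm]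
          by_cases hc2 : km q (j+2) ≤ n
          · rw [if_pos hc2, if_pos (by omega)]
            congr 1; omega
          · rw [if_neg hc2, if_neg (by omega)]
    intro j hj1 hj2
    by_cases hje : j = q - 1
    · subst hje
      rw [hrec3 (n+1) (by omega), key 1 (Nat.le_refl 1) (by omega)]
      have hkm1 : km q 1 = N := by unfold km; split <;> omega
      have hkm0 : km q (q-1) = 0 := by unfold km; split <;> omega
      rw [if_neg (by omega : ¬(q % 2 = 0 ∧ 1 % 2 = 0)), hkm1,
        if_neg (by omega : ¬(q % 2 = 0 ∧ (q-1) % 2 = 0)), hkm0,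
        if_pos (Nat.zero_le _), Nat.sub_zero]
      rw [show auxF σ N (n+1) = (σ (n+2) - σ (n+1)) +
        (if h : 1 ≤ N ∧ N ≤ n + 1 then auxF σ N (n + 1 - N) else 0) from by rw [auxF]]
      by_cases hcn : N ≤ n + 1
      · rw [dif_pos ⟨hN1, hcn⟩, if_pos hcn]; ring
      · rw [dif_neg (by omega), if_neg hcn]; ring
    · exact key j hj1 (by omega)
private lemma auxF_eq_delta (σ : ℕ → ℝ) (N : ℕ) :
    ∀ m, 1 ≤ m → m ≤ N - 1 → auxF σ N m = σ (m+1) - σ m := by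
  intro m hm1 hm2
  obtain ⟨t, rfl⟩ : ∃ t, m = t + 1 := ⟨m - 1, by omega⟩
  rw [show auxF σ N (t+1) = (σ (t+2) - σ (t+1)) +
    (if h : 1 ≤ N ∧ N ≤ t + 1 then auxF σ N (t + 1 - N) else 0) from by rw [auxF],
    dif_neg (by omega), add_zero]

private lemma RL (g : ℕ → ℝ) (m : ℕ) :
    ∑ l ∈ Finset.range m, g (m - l) = ∑ l ∈ Finset.range m, g (l + 1) := by
  rw [← Finset.sum_range_reflect (fun l => g (l + 1)) m]
  refine Finset.sum_congr rfl fun j hj => ?_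
  rw [Finset.mem_range] at hj
  congr 1; omega

private lemma SI (g : ℕ → ℝ) (m : ℕ) :
    ∑ l ∈ Finset.range m, g (l + 1) = ∑ k ∈ Finset.Icc 1 m, g k := by
  rw [← Finset.Ico_add_one_right_eq_Icc, Finset.sum_Ico_eq_sum_range]
  simp only [Nat.succ_sub_one, Nat.add_sub_cancel]
  exact Finset.sum_congr rfl fun j _ => by rw [Nat.add_comm]

private lemma AB (v τ : ℕ → ℝ) : ∀ M, 1 ≤ M →
    ∑ k ∈ Finset.Icc 1 M, v k * (τ (k-1) - τ k)
      = v 1 * τ 0 - v M * τ M + ∑ k ∈ Finset.Icc 1 (M-1), (v (k+1) - v k) * τ k := by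
  intro M
  induction M with
  | zero => exact fun h => absurd h (by omega)
  | succ M IH =>
    intro _
    rcases Nat.eq_zero_or_pos M with h0 | hM
    · subst h0; simp; ring
    · obtain ⟨m, rfl⟩ : ∃ m, M = m + 1 := ⟨M - 1, by omega⟩
      rw [Finset.sum_Icc_succ_top (by omega : 1 ≤ m + 1 + 1), IH (by omega)]
      simp only [Nat.add_sub_cancel]
      rw [Finset.sum_Icc_succ_top (by omega : 1 ≤ m + 1)]
      ring

private lemma TK (q N : ℕ) (σ : ℕ → ℝ) (c : ℕ → ℕ → ℝ)
    (hq : 3 ≤ q)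
    (hqp : q % 2 = 0 ∧ 2*N + 2 = q ∨ q % 2 = 1 ∧ N + 2 = q)
    (hml : ∀ n j, 1 ≤ j → j ≤ q - 1 →
      c n j = if q % 2 = 0 ∧ j % 2 = 0 then 0
        else if km q j ≤ n then auxF σ N (n - km q j) else 0) :
    ∀ n, ∑ j ∈ Finset.Icc 2 (q-2), (((q:ℝ) - 2*j)/(2*(q:ℝ))) * c n j
       = ∑ k ∈ Finset.Icc 1 (N-1), uC q k * (if k ≤ n then auxF σ N (n - k) else 0) := by
  intro n
  have step1 : ∀ j ∈ Finset.Icc 2 (q-2), (((q:ℝ) - 2*j)/(2*(q:ℝ))) * c n j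
      = if ¬(q % 2 = 0 ∧ j % 2 = 0) then
          (((q:ℝ) - 2*j)/(2*(q:ℝ))) * (if km q j ≤ n then auxF σ N (n - km q j) else 0)
        else 0 := by
    intro j hj
    rw [Finset.mem_Icc] at hj
    rw [hml n j (by omega) (by omega)]
    by_cases hex : q % 2 = 0 ∧ j % 2 = 0
    · rw [if_pos hex, if_neg (by tauto), mul_zero]
    · rw [if_neg hex, if_pos hex]
  rw [Finset.sum_congr rfl step1, ← Finset.sum_filter]
  refine Finset.sum_nbij' (km q) (jm q) ?_ ?_ ?_ ?_ ?_
  · intro j hj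
    rw [Finset.mem_filter, Finset.mem_Icc] at hj
    rw [Finset.mem_Icc]
    obtain ⟨⟨hj2, hj3⟩, hj4⟩ := hj
    unfold km; split <;> omega
  · intro k hk
    rw [Finset.mem_Icc] at hk
    rw [Finset.mem_filter, Finset.mem_Icc]
    unfold jm; split <;> omega
  · intro j hj
    rw [Finset.mem_filter, Finset.mem_Icc] at hj
    obtain ⟨⟨hj2, hj3⟩, hj4⟩ := hj
    by_cases hb2 : (q - 1 - j) % 2 = 0
    · have h1 : km q j = (q-1-j)/2 := by unfold km; rw [if_pos hb2]
      rw [h1]; unfold jm; split <;> omega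
    · have h1 : km q j = (2*q-3-j)/2 := by unfold km; rw [if_neg hb2]
      rw [h1]; unfold jm; split <;> omega
  · intro k hk
    rw [Finset.mem_Icc] at hk
    by_cases hb2 : 2*k + 3 ≤ q
    · have h1 : jm q k = q - 1 - 2*k := by unfold jm; rw [if_pos hb2]
      rw [h1]; unfold km; split <;> omega
    · have h1 : jm q k = 2*q - 3 - 2*k := by unfold jm; rw [if_neg hb2]
      rw [h1]; unfold km; split <;> omega
  · intro j hj
    rw [Finset.mem_filter, Finset.mem_Icc] at hj
    obtain ⟨⟨hj2, hj3⟩, hj4⟩ := hj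
    have hw : ((q:ℝ) - 2*j)/(2*(q:ℝ)) = uC q (km q j) := by
      by_cases hb2 : (q - 1 - j) % 2 = 0
      · have hmj : 2 * (km q j) + j + 1 = q := by
          unfold km; rw [if_pos hb2]; omega
        have hind : ¬(q % 2 = 1 ∧ q ≤ 2 * (km q j) + 1) := by omega
        have hcast : 2*((km q j : ℕ):ℝ) + (j:ℝ) + 1 = (q:ℝ) := by exact_mod_cast hmj
        unfold uC
        rw [if_neg hind, sub_zero]
        congr 1
        linarith
      · have hqodd : q % 2 = 1 ∧ j % 2 = 1 := by omega
        have hmj : 2 * (km q j) + j + 3 = 2*q := by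
          unfold km; rw [if_neg hb2]; omega
        have hind : q % 2 = 1 ∧ q ≤ 2 * (km q j) + 1 := ⟨hqodd.1, by omega⟩
        have hcast : 2*((km q j : ℕ):ℝ) + (j:ℝ) + 3 = 2*(q:ℝ) := by exact_mod_cast hmj
        unfold uC
        rw [if_pos hind, div_sub_div_same]
        congr 1
        linarith
    rw [hw]

private noncomputable def TS (q N : ℕ) (σ : ℕ → ℝ) (n : ℕ) : ℝ :=
  ∑ k ∈ Finset.Icc 1 (N-1), uC q k * (if k ≤ n then auxF σ N (n - k) else 0)

private lemma TS_trunc (q N : ℕ) (σ : ℕ → ℝ) (hN1 : 1 ≤ N) :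
    ∀ n, n ≤ N - 1 → TS q N σ n = ∑ k ∈ Finset.Icc 1 n, uC q k * auxF σ N (n - k) := by
  intro n hn
  unfold TS
  have hicc : Finset.Icc 1 (N-1) = Finset.Ico 1 N := by
    rw [← Finset.Ico_add_one_right_eq_Icc]; congr 1; omega
  rw [hicc, ← Finset.sum_Ico_consecutive _ (by omega : 1 ≤ n+1) (by omega : n+1 ≤ N)]
  have h2 : ∑ k ∈ Finset.Ico (n+1) N, (uC q k * (if k ≤ n then auxF σ N (n - k) else 0)) = 0 := by
    refine Finset.sum_eq_zero fun k hk => ?_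
    rw [Finset.mem_Ico] at hk
    rw [if_neg (by omega), mul_zero]
  rw [h2, add_zero, Finset.Ico_add_one_right_eq_Icc]
  refine Finset.sum_congr rfl fun k hk => ?_
  rw [Finset.mem_Icc] at hk
  rw [if_pos hk.2]

private lemma TS_full (q N : ℕ) (σ : ℕ → ℝ) :
    ∀ n, N - 1 ≤ n → TS q N σ n = ∑ k ∈ Finset.Icc 1 (N-1), uC q k * auxF σ N (n - k) := by
  intro n hn
  unfold TS
  refine Finset.sum_congr rfl fun k hk => ?_
  rw [Finset.mem_Icc] at hk
  rw [if_pos (by omega)]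

private lemma TS_delta (q N : ℕ) (σ : ℕ → ℝ) (hN1 : 1 ≤ N) :
    TS q N σ N
      = ∑ k ∈ Finset.Icc 1 (N-1), uC q k * (σ (N - k + 1) - σ (N - k)) := by
  rw [TS_full q N σ N (by omega)]
  refine Finset.sum_congr rfl fun k hk => ?_
  rw [Finset.mem_Icc] at hk
  rw [auxF_eq_delta σ N (N - k) (by omega) (by omega)]

private lemma TS_diff (q N : ℕ) (σ : ℕ → ℝ) (hN1 : 1 ≤ N) :
    ∀ n, N + 1 ≤ n → TS q N σ n - TS q N σ (n - N)
      = ∑ k ∈ Finset.Icc 1 (N-1), uC q k * (σ (n - k + 1) - σ (n - k)) := by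
  intro n hn
  rw [TS_full q N σ n (by omega)]
  unfold TS
  rw [← Finset.sum_sub_distrib]
  refine Finset.sum_congr rfl fun k hk => ?_
  rw [Finset.mem_Icc] at hk
  rw [← mul_sub]
  obtain ⟨t, ht⟩ : ∃ t, n - k = t + 1 := ⟨n - k - 1, by omega⟩
  rw [ht]
  rw [show auxF σ N (t+1) = (σ (t+2) - σ (t+1)) +
    (if h : 1 ≤ N ∧ N ≤ t + 1 then auxF σ N (t + 1 - N) else 0) from by rw [auxF]]
  by_cases hc : k ≤ n - N
  · rw [dif_pos ⟨hN1, by omega⟩, if_pos hc, show t + 1 - N = n - N - k from by omega]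
    ring
  · rw [dif_neg (by omega), if_neg hc]
    ring

/-- STATEMENT 10 (the paper's Theorem 2, growth recursion formulas), stated for abstract real
sequences: `σ n` are the sphere cardinalities, `c n j` satisfy the recurrences (i)–(iii) of the
face-counting quantities, `K n = κ(S_n)` satisfies equation (6.3) of [BP1] (taken here as a
hypothesis), and `κ' n = (2q/(q-2))·K n`.  Here `N = (q-2)/2` for `q` even and `N = q-2` for
`q` odd, and `b l = 4/(q-2)` except `b ((N-1)/2) = 4/(q-2) - 2` when `q` is odd. -/
theorem growth_recursion (q : ℕ) (hq : 3 ≤ q)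
    (N : ℕ) (hN : N = if Even q then (q - 2) / 2 else q - 2)
    (b : ℕ → ℝ)
    (hb : ∀ l, l ≤ N - 1 →
      b l = if ¬ Even q ∧ l = (N - 1) / 2 then 4 / ((q : ℝ) - 2) - 2 else 4 / ((q : ℝ) - 2))
    (σ : ℕ → ℝ) (hσ0 : σ 0 = 1)
    (c : ℕ → ℕ → ℝ)
    (hc0 : ∀ j, 1 ≤ j → j ≤ q - 2 → c 0 j = 0)
    (hc0' : c 0 (q - 1) = σ 1)
    (hrec1 : ∀ n, 1 ≤ n → ∀ l, 1 ≤ l → l ≤ q - 3 → c n l = c (n - 1) (l + 2))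
    (hrec2 : ∀ n, 1 ≤ n → c n (q - 2) = c (n - 1) 2)
    (hrec3 : ∀ n, 1 ≤ n → c n (q - 1) = c n 1 + σ (n + 1) - σ n)
    (K : ℕ → ℝ)
    (hK0 : K 0 = 1 - (((q : ℝ) - 2) / (2 * q)) * σ 1)
    (hK : ∀ n, 1 ≤ n → ∑ l ∈ Finset.range (n + 1), K l
        = 1 - (((q : ℝ) - 2) / (2 * q)) * (σ (n + 1) - σ n)
          + ∑ j ∈ Finset.Icc 2 (q - 2), (((q : ℝ) - 2 * j) / (2 * q)) * c n j)
    (κ' : ℕ → ℝ) (hκ' : ∀ m, κ' m = (2 * (q : ℝ) / ((q : ℝ) - 2)) * K m)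
    (n : ℕ) (hn : 1 ≤ n) :
    (n < N → σ (n + 1) = σ 1 + ∑ l ∈ Finset.range n, (b l * σ (n - l) - κ' (n - l))) ∧
    (n = N → σ (N + 1) = ∑ l ∈ Finset.range N, (b l * σ (N - l) - κ' (N - l))) ∧
    (N < n → σ (n + 1) = -σ (n - N) + ∑ l ∈ Finset.range N, (b l * σ (n - l) - κ' (n - l))) := by
  
  have hqp : q % 2 = 0 ∧ 2*N + 2 = q ∨ q % 2 = 1 ∧ N + 2 = q := by
    rcases Nat.even_or_odd q with he | ho
    · left
      rw [hN, if_pos he]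
      obtain ⟨t, ht⟩ := he
      constructor <;> omega
    · right
      rw [hN, if_neg (by simpa [Nat.not_even_iff_odd] using ho)]
      obtain ⟨t, ht⟩ := ho
      constructor <;> omega
  have hN1 : 1 ≤ N := by omega
  have hqR : (q:ℝ) ≠ 0 := by positivity
  have hq2R : (q:ℝ) - 2 ≠ 0 := by
    have : (3:ℝ) ≤ (q:ℝ) := by exact_mod_cast hq
    linarith
  set A : ℝ := ((q : ℝ) - 2) / (2 * q) with hA
  have hApos : 0 < A := by
    rw [hA]
    apply div_pos
    · have : (3:ℝ) ≤ (q:ℝ) := by exact_mod_cast hq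
      linarith
    · have : (0:ℝ) < (q:ℝ) := by positivity
      linarith
  have hAne : A ≠ 0 := ne_of_gt hApos
  have hml := ML q N σ c hq hqp hc0 hc0' hrec1 hrec2 hrec3
  have htk : ∀ m, ∑ j ∈ Finset.Icc 2 (q - 2), (((q : ℝ) - 2 * j) / (2 * q)) * c m j
      = TS q N σ m := TK q N σ c hq hqp hml
  -- K in terms of κ'
  have hKk : ∀ l, K l = A * κ' l := by
    intro l
    rw [hκ' l, hA]
    field_simp
  -- the master equation E
  have E : ∀ m, 1 ≤ m → A * σ (m+1) = A * σ m + A * σ 1 + TS q N σ m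
      - ∑ l ∈ Finset.range m, (A * κ' (l+1)) := by
    intro m hm
    have h1 := hK m hm
    rw [Finset.sum_range_succ' K m, htk m, hK0] at h1
    have h2 : ∑ l ∈ Finset.range m, K (l+1) = ∑ l ∈ Finset.range m, (A * κ' (l+1)) :=
      Finset.sum_congr rfl fun l _ => hKk (l+1)
    rw [h2] at h1
    have h3 : A * (σ (m+1) - σ m) = A * σ (m+1) - A * σ m := by ring
    linarith [h1, h3]
  -- b facts
  have hbq : ∀ l, l ≤ N - 1 →
      A * b l = 2/(q:ℝ) - (if ¬ Even q ∧ l = (N-1)/2 then 2*A else 0) := by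
    intro l hl
    rw [hb l hl]
    by_cases hc : ¬ Even q ∧ l = (N-1)/2
    · rw [if_pos hc, if_pos hc, hA]
      field_simp
      ring
    · rw [if_neg hc, if_neg hc, hA]
      field_simp
      ring
  have hnotev : q % 2 = 1 → ¬ Even q := by
    intro h1 h2
    rw [Nat.even_iff] at h2
    omega
  have hU1 : 2 ≤ N → uC q 1 = A * b 0 - A := by
    intro h2N
    rw [hbq 0 (by omega)]
    have hcond : ¬(¬ Even q ∧ 0 = (N-1)/2) := by
      rcases hqp with ⟨h1, h2⟩ | ⟨h1, h2⟩
      · exact fun h => h.1 (Nat.even_iff.mpr h1)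
      · intro h
        have h3 := h.2
        omega
    rw [if_neg hcond, sub_zero]
    unfold uC
    rw [if_neg (by omega : ¬(q % 2 = 1 ∧ q ≤ 2*1+1)), sub_zero, hA]
    push_cast
    field_simp
    ring
  have hU2 : 2 ≤ N → uC q (N-1) = A - A * b (N-1) := by
    intro h2N
    rw [hbq (N-1) (le_refl _)]
    have hcond : ¬(¬ Even q ∧ N-1 = (N-1)/2) := by
      rcases hqp with ⟨h1, h2⟩ | ⟨h1, h2⟩
      · exact fun h => h.1 (Nat.even_iff.mpr h1)
      · intro h
        have h3 := h.2
        omega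
    rw [if_neg hcond, sub_zero]
    unfold uC
    rcases hqp with ⟨h1, h2⟩ | ⟨h1, h2⟩
    · rw [if_neg (by omega : ¬(q % 2 = 1 ∧ q ≤ 2*(N-1)+1)), sub_zero]
      have hcast : 2*((N-1 : ℕ):ℝ) + 4 = (q:ℝ) := by
        exact_mod_cast (by omega : 2*(N-1) + 4 = q)
      rw [hA]
      rw [show ((N-1 : ℕ):ℝ) = ((q:ℝ) - 4)/2 from by linarith]
      field_simp
      ring
    · rw [if_pos ⟨h1, by omega⟩]
      have hcast : ((N-1 : ℕ):ℝ) + 3 = (q:ℝ) := by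
        exact_mod_cast (by omega : (N-1) + 3 = q)
      rw [hA]
      rw [show ((N-1 : ℕ):ℝ) = (q:ℝ) - 3 from by linarith]
      field_simp
      ring
  have hUb : ∀ k, 1 ≤ k → k ≤ N-2 → uC q (k+1) - uC q k = A * b k := by
    intro k h1k h2k
    rw [hbq k (by omega)]
    unfold uC
    rcases hqp with ⟨h1, h2⟩ | ⟨h1, h2⟩
    · rw [if_neg (by omega : ¬(q % 2 = 1 ∧ q ≤ 2*(k+1)+1)),
        if_neg (by omega : ¬(q % 2 = 1 ∧ q ≤ 2*k+1)), sub_zero, sub_zero,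
        if_neg (fun h => h.1 (Nat.even_iff.mpr h1)), sub_zero]
      push_cast
      field_simp
      ring
    · by_cases hk : k = (N-1)/2
      · rw [if_pos ⟨h1, by omega⟩, if_neg (by omega : ¬(q % 2 = 1 ∧ q ≤ 2*k+1)), sub_zero,
          if_pos ⟨hnotev h1, hk⟩, hA]
        push_cast
        field_simp
        ring
      · by_cases hk2 : q ≤ 2*k+1
        · rw [if_pos ⟨h1, by omega⟩, if_pos ⟨h1, hk2⟩,
            if_neg (fun h => hk h.2), sub_zero]
          push_cast
          ring
        · rw [if_neg (by omega : ¬(q % 2 = 1 ∧ q ≤ 2*(k+1)+1)),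
            if_neg (by omega : ¬(q % 2 = 1 ∧ q ≤ 2*k+1)), sub_zero, sub_zero,
            if_neg (fun h => hk h.2), sub_zero]
          push_cast
          field_simp
          ring
  -- the two key summation identities
  have LIII : ∀ m, N ≤ m →
      (∑ k ∈ Finset.Icc 1 (N-1), uC q k * (σ (m - k + 1) - σ (m - k)))
        + A * σ m + A * σ (m - N + 1)
      = ∑ l ∈ Finset.range N, (A * b l * σ (m - l)) := by
    intro m hNm
    rcases Nat.lt_or_ge N 2 with hN2 | hN2
    · have hN1' : N = 1 := by omega
      have hb0 : A * b 0 = 2 * A := by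
        rw [hbq 0 (by omega)]
        rcases hqp with ⟨h1, h2⟩ | ⟨h1, h2⟩
        · rw [if_neg (fun h => h.1 (Nat.even_iff.mpr h1))]
          have hq4 : (q:ℝ) = 4 := by exact_mod_cast (by omega : q = 4)
          rw [hA, hq4]
          norm_num
        · rw [if_pos ⟨hnotev h1, by omega⟩]
          have hq3 : (q:ℝ) = 3 := by exact_mod_cast (by omega : q = 3)
          rw [hA, hq3]
          norm_num
      rw [hN1']
      rw [show (1:ℕ) - 1 = 0 from rfl, Finset.Icc_eq_empty (by omega), Finset.sum_empty,
        Finset.sum_range_one, Nat.sub_zero, show m - 1 + 1 = m from by omega, hb0]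
      ring
    · obtain ⟨m2, hm2⟩ : ∃ m2, N - 1 = m2 + 1 := ⟨N-2, by omega⟩
      have habel := AB (uC q) (fun k => σ (m - k)) (N-1) (by omega)
      have h1 : ∑ k ∈ Finset.Icc 1 (N-1), uC q k * (σ (m - k + 1) - σ (m - k))
          = ∑ k ∈ Finset.Icc 1 (N-1), uC q k * (σ (m - (k-1)) - σ (m - k)) := by
        refine Finset.sum_congr rfl fun k hk => ?_
        rw [Finset.mem_Icc] at hk
        rw [show m - (k-1) = m - k + 1 from by omega]
      rw [h1, habel]
      have hrhs : ∑ l ∈ Finset.range N, (A * b l * σ (m - l))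
          = A * b 0 * σ (m - 0) + (∑ k ∈ Finset.Icc 1 m2, (A * b k * σ (m - k))
              + A * b (m2+1) * σ (m - (m2+1))) := by
        rw [show N = m2 + 2 from by omega, Finset.sum_range_succ',
          SI (fun k => A * b k * σ (m - k)) (m2+1),
          Finset.sum_Icc_succ_top (by omega : 1 ≤ m2+1)]
        ring
      rw [hrhs, hm2]
      simp only [Nat.add_sub_cancel, Nat.sub_zero]
      have hmid : ∑ k ∈ Finset.Icc 1 m2, (uC q (k+1) - uC q k) * σ (m - k)
          = ∑ k ∈ Finset.Icc 1 m2, (A * b k * σ (m - k)) := by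
        refine Finset.sum_congr rfl fun k hk => ?_
        rw [Finset.mem_Icc] at hk
        rw [hUb k hk.1 (by omega)]
      rw [hmid]
      have h4 : uC q 1 = A * b 0 - A := hU1 hN2
      have h5 : uC q (m2+1) = A - A * b (m2+1) := by
        have := hU2 hN2
        rw [hm2] at this
        exact this
      rw [h4, h5, show m - N + 1 = m - (m2+1) from by omega]
      ring
  have LI : ∀ m, 1 ≤ m → m ≤ N - 1 →
      TS q N σ m + A * σ m = ∑ l ∈ Finset.range m, (A * b l * σ (m - l)) := by
    intro m hm1 hm2
    have hN2 : 2 ≤ N := by omega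
    obtain ⟨m1, rfl⟩ : ∃ m1, m = m1 + 1 := ⟨m - 1, by omega⟩
    rw [TS_trunc q N σ hN1 (m1+1) hm2]
    rw [Finset.sum_Icc_succ_top (by omega : 1 ≤ m1+1)]
    have hF0 : auxF σ N (m1+1 - (m1+1)) = σ 1 := by
      rw [Nat.sub_self]
      rw [auxF]
    have hinner : ∑ k ∈ Finset.Icc 1 m1, uC q k * auxF σ N (m1+1 - k)
        = ∑ k ∈ Finset.Icc 1 m1, uC q k * (σ (m1+1 - k + 1) - σ (m1+1 - k)) := by
      refine Finset.sum_congr rfl fun k hk => ?_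
      rw [Finset.mem_Icc] at hk
      rw [auxF_eq_delta σ N (m1+1 - k) (by omega) (by omega)]
    rw [hinner, hF0]
    have habel := AB (uC q) (fun k => σ (m1+1 - k)) (m1+1) (by omega)
    simp only [Nat.add_sub_cancel, Nat.sub_self, Nat.sub_zero] at habel
    have hcorr : ∑ k ∈ Finset.Icc 1 (m1+1), uC q k * (σ (m1+1 - (k-1)) - σ (m1+1 - k))
        = ∑ k ∈ Finset.Icc 1 m1, uC q k * (σ (m1+1 - k + 1) - σ (m1+1 - k))
          + uC q (m1+1) * (σ 1 - σ 0) := by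
      rw [Finset.sum_Icc_succ_top (by omega : 1 ≤ m1+1)]
      have h6 : ∑ k ∈ Finset.Icc 1 m1, uC q k * (σ (m1+1 - (k-1)) - σ (m1+1 - k))
          = ∑ k ∈ Finset.Icc 1 m1, uC q k * (σ (m1+1 - k + 1) - σ (m1+1 - k)) := by
        refine Finset.sum_congr rfl fun k hk => ?_
        rw [Finset.mem_Icc] at hk
        rw [show m1+1 - (k-1) = m1+1 - k + 1 from by omega]
      rw [h6, show m1+1 - (m1+1-1) = 1 from by omega, Nat.sub_self]
    rw [hcorr] at habel
    -- habel : inner + uC (m1+1) * (σ 1 - σ 0) = uC 1 * σ (m1+1) - uC (m1+1) * σ 0 + mid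
    have hmid : ∑ k ∈ Finset.Icc 1 m1, (uC q (k+1) - uC q k) * σ (m1+1 - k)
        = ∑ k ∈ Finset.Icc 1 m1, (A * b k * σ (m1+1 - k)) := by
      refine Finset.sum_congr rfl fun k hk => ?_
      rw [Finset.mem_Icc] at hk
      rw [hUb k hk.1 (by omega)]
    rw [hmid] at habel
    have hrhs : ∑ l ∈ Finset.range (m1+1), (A * b l * σ (m1+1 - l))
        = A * b 0 * σ (m1+1 - 0) + ∑ k ∈ Finset.Icc 1 m1, (A * b k * σ (m1+1 - k)) := by
      rw [Finset.sum_range_succ', SI (fun k => A * b k * σ (m1+1 - k)) m1]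
      ring
    rw [hrhs, Nat.sub_zero]
    have h4 : uC q 1 = A * b 0 - A := hU1 hN2
    rw [h4] at habel
    rw [hσ0] at habel
    linarith [habel]
  -- κ' sum bookkeeping
  have hPrefl : ∀ m, ∑ l ∈ Finset.range m, (A * κ' (m - l))
      = ∑ l ∈ Finset.range m, (A * κ' (l+1)) := fun m => RL (fun t => A * κ' t) m
  refine ⟨?_, ?_, ?_⟩
  · -- n < N
    intro hnN
    apply mul_left_cancel₀ hAne
    have hgoal : A * (σ 1 + ∑ l ∈ Finset.range n, (b l * σ (n - l) - κ' (n - l)))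
        = A * σ 1 + (∑ l ∈ Finset.range n, (A * b l * σ (n - l))
            - ∑ l ∈ Finset.range n, (A * κ' (n - l))) := by
      rw [mul_add, Finset.mul_sum, ← Finset.sum_sub_distrib]
      congr 1
      exact Finset.sum_congr rfl fun l _ => by ring
    rw [hgoal, hPrefl n]
    have hE := E n hn
    have hLI := LI n hn (by omega)
    linarith [hE, hLI]
  · -- n = N
    intro hnN
    subst hnN
    apply mul_left_cancel₀ hAne
    have hgoal : A * (∑ l ∈ Finset.range n, (b l * σ (n - l) - κ' (n - l)))
        = ∑ l ∈ Finset.range n, (A * b l * σ (n - l))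
            - ∑ l ∈ Finset.range n, (A * κ' (n - l)) := by
      rw [Finset.mul_sum, ← Finset.sum_sub_distrib]
      exact Finset.sum_congr rfl fun l _ => by ring
    rw [hgoal, hPrefl n]
    have hE := E n hn
    have hLIII := LIII n (le_refl n)
    rw [show n - n + 1 = 1 from by omega] at hLIII
    have hTSN := TS_delta q n σ hN1
    linarith [hE, hLIII, hTSN]
  · -- N < n
    intro hNn
    apply mul_left_cancel₀ hAne
    have hgoal : A * (-σ (n - N) + ∑ l ∈ Finset.range N, (b l * σ (n - l) - κ' (n - l)))
        = -(A * σ (n - N)) + (∑ l ∈ Finset.range N, (A * b l * σ (n - l))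
            - ∑ l ∈ Finset.range N, (A * κ' (n - l))) := by
      rw [mul_add, Finset.mul_sum, ← Finset.sum_sub_distrib]
      congr 1
      · ring
      · exact Finset.sum_congr rfl fun l _ => by ring
    rw [hgoal]
    have hsplit : ∑ l ∈ Finset.range N, (A * κ' (n - l))
        = ∑ l ∈ Finset.range n, (A * κ' (l+1)) - ∑ l ∈ Finset.range (n-N), (A * κ' (l+1)) := by
      have h2 : ∑ l ∈ Finset.Ico N n, (A * κ' (n - l))
          = ∑ l ∈ Finset.range (n-N), (A * κ' (l+1)) := by
        rw [Finset.sum_Ico_eq_sum_range]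
        rw [← hPrefl (n-N)]
        refine Finset.sum_congr rfl fun k hk => ?_
        rw [Finset.mem_range] at hk
        rw [show n - (N + k) = n - N - k from by omega]
      have h4 : ∑ l ∈ Finset.Ico 0 N, (A * κ' (n - l))
          = ∑ l ∈ Finset.range N, (A * κ' (n - l)) := by
        rw [← Finset.range_eq_Ico]
      have h5 : ∑ l ∈ Finset.Ico 0 N, (A * κ' (n - l)) + ∑ l ∈ Finset.Ico N n, (A * κ' (n - l))
          = ∑ l ∈ Finset.Ico 0 n, (A * κ' (n - l)) :=
        Finset.sum_Ico_consecutive _ (Nat.zero_le N) (le_of_lt hNn)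
      have h6 : ∑ l ∈ Finset.Ico 0 n, (A * κ' (n - l)) = ∑ l ∈ Finset.range n, (A * κ' (l+1)) := by
        rw [← Finset.range_eq_Ico]
        exact hPrefl n
      linarith [h2, h4, h5, h6]
    rw [hsplit]
    have hE1 := E n hn
    have hE2 := E (n - N) (by omega)
    rw [show n - N + 1 = n - N + 1 from rfl] at hE2
    have hTdiff := TS_diff q N σ hN1 n (by omega)
    have hLIII := LIII n (le_of_lt hNn)
    linarith [hE1, hE2, hTdiff, hLIII]
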